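/- arXiv:0810.5567 — 2 statements merged into one kernel-verified Lean document; each statement's English description precedes it below -/
import Mathlib

section
/- Fix p ∈ (0,1/2) and an integer A ≥ 4. There exists a constant ζ₁ > 0 such that for all sufficiently large m, P̂[ĝ_m(k) ≤ Ŝ_k ≤ d̂_m(k) for all k ∈ {0,…,m}] ≥ exp(−ζ₁·m^{1/3}), where (S_k) under P̂ is a random walk started at 0 with i.i.d. steps of law v(p)·δ_1 + (1−v(p))·δ_0 and Ŝ_k := S_k − v(p)·k. -/
set_option maxHeartbeats 1000000


open MeasureTheory ProbabilityTheory Filter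

noncomputable section

/-- The random walk step distribution `p·δ₁ + (1−p)·δ₀` on `ℤ`. -/
def bernoulliStep (p : ℝ) : Measure ℤ :=
  ENNReal.ofReal p • Measure.dirac 1 + ENNReal.ofReal (1 - p) • Measure.dirac 0

/-- The large deviations rate function `Λ` for sums of i.i.d. Bernoulli(`p`) variables. -/
def rateFn (p x : ℝ) : ℝ :=
  x * Real.log (x / p) + (1 - x) * Real.log ((1 - x) / (1 - p))

/-- `a_m = ⌊m^{1/3}⌋`. -/
def am (m : ℕ) : ℕ := ⌊(m : ℝ) ^ ((1 : ℝ) / 3)⌋₊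

/-- `c_m = ⌊m^{2/3}⌋`. -/
def cm (m : ℕ) : ℕ := ⌊(m : ℝ) ^ ((2 : ℝ) / 3)⌋₊

/-- `s_m = ⌊a_m / (2(1 − v(p)))⌋`. -/
def sm (vp : ℝ) (m : ℕ) : ℕ := ⌊(am m : ℝ) / (2 * (1 - vp))⌋₊

/-- The upper barrier `d_m`. -/
def dBar (vp : ℝ) (m k : ℕ) : ℝ :=
  if k ≤ sm vp m then (k : ℝ) else vp * k + am m

/-- The lower barrier `g_m`. -/
def gBar (vp : ℝ) (A m k : ℕ) : ℝ :=
  if k ≤ sm vp m then (k : ℝ)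
  else if k ≤ m - cm m then vp * ((k : ℝ) + 1)
  else vp * k - A * am m

/-- The random walk with increments `ξ`, started at `0`. -/
def walk {Ω : Type*} (ξ : ℕ → Ω → ℤ) (k : ℕ) (ω : Ω) : ℤ :=
  ∑ j ∈ Finset.range k, ξ j ω

section TubeAuxSection
open Finset
namespace TubeAux


/-- real value of a step bit -/
def indR (b : Bool) : ℝ := if b then 1 else 0

/-- weight of a bit -/
def thw (v : ℝ) (b : Bool) : ℝ := if b then v else 1 - v

/-- weight of a string -/
def wt (v : ℝ) (l : List Bool) : ℝ := (l.map (thw v)).prod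

/-- all bit strings of length n (head = first step) -/
def allB : ℕ → Finset (List Bool)
  | 0 => {[]}
  | n + 1 => ((allB n).image (List.cons true)) ∪ ((allB n).image (List.cons false))

/-- walk value at time k -/
def cw (l : List Bool) (k : ℕ) : ℝ := ∑ j ∈ Finset.range k, indR (l.getD j false)

/-- compensated walk -/
def Yd (v : ℝ) (l : List Bool) (k : ℕ) : ℝ := cw l k - v * k

@[simp] lemma indR_true : indR true = 1 := rfl
@[simp] lemma indR_false : indR false = 0 := rfl
@[simp] lemma thw_true (v : ℝ) : thw v true = v := rfl
@[simp] lemma thw_false (v : ℝ) : thw v false = 1 - v := rfl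

lemma mem_allB {n : ℕ} {l : List Bool} : l ∈ allB n ↔ l.length = n := by
  induction n generalizing l with
  | zero => simp [allB, List.length_eq_zero_iff]
  | succ n ih =>
    simp only [allB, mem_union, mem_image]
    constructor
    · rintro (⟨a, ha, rfl⟩ | ⟨a, ha, rfl⟩) <;> simp [ih.1 ha]
    · intro hl
      cases l with
      | nil => simp at hl
      | cons b t =>
        have ht : t ∈ allB n := ih.2 (by simpa using hl)
        cases b
        · exact Or.inr ⟨t, ht, rfl⟩
        · exact Or.inl ⟨t, ht, rfl⟩

lemma sum_allB_succ {n : ℕ} (F : List Bool → ℝ) :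
    ∑ l ∈ allB (n + 1), F l = ∑ l ∈ allB n, (F (true :: l) + F (false :: l)) := by
  have hdisj : Disjoint ((allB n).image (List.cons true)) ((allB n).image (List.cons false)) := by
    simp only [Finset.disjoint_left, mem_image]
    rintro a ⟨x, _, rfl⟩ ⟨y, _, h⟩
    simp at h
  rw [allB, Finset.sum_union hdisj, Finset.sum_image (by simp), Finset.sum_image (by simp),
    Finset.sum_add_distrib]

lemma sum_allB_append {t u : ℕ} (F : List Bool → ℝ) :
    ∑ l ∈ allB (t + u), F l = ∑ l₁ ∈ allB t, ∑ l₂ ∈ allB u, F (l₁ ++ l₂) := by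
  induction t generalizing F with
  | zero => simp [allB, Nat.zero_add]
  | succ t ih =>
    have h : t + 1 + u = (t + u) + 1 := by omega
    rw [h, sum_allB_succ, ih (fun l => F (true :: l) + F (false :: l)),
      sum_allB_succ (fun l₁ => ∑ l₂ ∈ allB u, F (l₁ ++ l₂))]
    refine Finset.sum_congr rfl fun l₁ _ => ?_
    rw [← Finset.sum_add_distrib]
    rfl

lemma wt_cons (v : ℝ) (b : Bool) (l : List Bool) : wt v (b :: l) = thw v b * wt v l := by
  simp [wt]

lemma wt_append (v : ℝ) (l₁ l₂ : List Bool) : wt v (l₁ ++ l₂) = wt v l₁ * wt v l₂ := by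
  simp [wt]

lemma wt_nonneg {v : ℝ} (h0 : 0 ≤ v) (h1 : v ≤ 1) (l : List Bool) : 0 ≤ wt v l := by
  induction l with
  | nil => simp [wt]
  | cons b t ih =>
    rw [wt_cons]
    have : 0 ≤ thw v b := by cases b <;> simp [thw] <;> linarith
    positivity

lemma cw_cons (b : Bool) (l : List Bool) (k : ℕ) :
    cw (b :: l) (k + 1) = indR b + cw l k := by
  rw [cw, Finset.sum_range_succ' (fun j => indR ((b :: l).getD j false))]
  simp [cw, add_comm]

lemma cw_zero (l : List Bool) : cw l 0 = 0 := by simp [cw]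

lemma Yd_cons (v : ℝ) (b : Bool) (l : List Bool) (k : ℕ) :
    Yd v (b :: l) (k + 1) = Yd v l k + (indR b - v) := by
  rw [Yd, Yd, cw_cons]; push_cast; ring



-- append lemmas

lemma cw_append_left (l₁ l₂ : List Bool) {k : ℕ} (hk : k ≤ l₁.length) :
    cw (l₁ ++ l₂) k = cw l₁ k := by
  refine Finset.sum_congr rfl fun j hj => ?_
  rw [Finset.mem_range] at hj
  rw [List.getD_append l₁ l₂ false j (by omega)]

lemma cw_append_right (l₁ l₂ : List Bool) (j : ℕ) :
    cw (l₁ ++ l₂) (l₁.length + j) = cw l₁ l₁.length + cw l₂ j := by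
  induction j with
  | zero =>
    simp only [Nat.add_zero, cw, Finset.range_zero, Finset.sum_empty, add_zero]
    exact cw_append_left l₁ l₂ le_rfl
  | succ j ih =>
    have h1 : l₁.length + (j+1) = (l₁.length + j) + 1 := rfl
    have h2 : (l₁ ++ l₂).getD (l₁.length + j) false = l₂.getD j false := by
      rw [List.getD_append_right l₁ l₂ false _ (by omega), Nat.add_sub_cancel_left]
    simp only [cw] at ih ⊢
    rw [h1, Finset.sum_range_succ, Finset.sum_range_succ (fun i => indR (l₂.getD i false)),
      ih, h2]
    ring

lemma Yd_append_left (v : ℝ) (l₁ l₂ : List Bool) {k : ℕ} (hk : k ≤ l₁.length) :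
    Yd v (l₁ ++ l₂) k = Yd v l₁ k := by rw [Yd, Yd, cw_append_left l₁ l₂ hk]

lemma Yd_append_right (v : ℝ) (l₁ l₂ : List Bool) (j : ℕ) :
    Yd v (l₁ ++ l₂) (l₁.length + j) = Yd v l₁ l₁.length + Yd v l₂ j := by
  rw [Yd, Yd, Yd, cw_append_right]; push_cast; ring


-- moments
variable {v : ℝ}

variable {v : ℝ}



lemma Ex_step (n : ℕ) (F : List Bool → ℝ) :
    ∑ l ∈ allB (n + 1), wt v l * F l
      = ∑ l ∈ allB n, wt v l * (v * F (true :: l) + (1 - v) * F (false :: l)) := by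
  rw [sum_allB_succ (fun l => wt v l * F l)]
  refine Finset.sum_congr rfl fun l _ => ?_
  rw [wt_cons, wt_cons, thw_true, thw_false]
  ring

lemma Ex_one (n : ℕ) : ∑ l ∈ allB n, wt v l = 1 := by
  induction n with
  | zero => simp [allB, wt]
  | succ n ih =>
    have := Ex_step (v := v) n (fun _ => 1)
    simpa [ih] using this

lemma Ex_Y1 (n : ℕ) : ∑ l ∈ allB n, wt v l * Yd v l n = 0 := by
  induction n with
  | zero => simp [allB, Yd, cw]
  | succ n ih =>
    rw [Ex_step n (fun l => Yd v l (n+1))]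
    have : ∀ l ∈ allB n, wt v l * (v * Yd v (true :: l) (n+1) + (1-v) * Yd v (false :: l) (n+1))
        = wt v l * Yd v l n := by
      intro l _
      rw [Yd_cons, Yd_cons, indR_true, indR_false]
      ring
    rw [Finset.sum_congr rfl this, ih]

lemma Ex_Y2 (n : ℕ) : ∑ l ∈ allB n, wt v l * (Yd v l n)^2 = n * (v * (1 - v)) := by
  induction n with
  | zero => simp [allB, Yd, cw]
  | succ n ih =>
    rw [Ex_step n (fun l => (Yd v l (n+1))^2)]
    have : ∀ l ∈ allB n, wt v l * (v * (Yd v (true :: l) (n+1))^2 + (1-v) * (Yd v (false :: l) (n+1))^2)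
        = wt v l * ((Yd v l n)^2 + v * (1-v)) := by
      intro l _
      rw [Yd_cons, Yd_cons, indR_true, indR_false]
      ring
    rw [Finset.sum_congr rfl this]
    have hd : ∀ l : List Bool, wt v l * ((Yd v l n)^2 + v * (1-v))
        = wt v l * (Yd v l n)^2 + (v*(1-v)) * wt v l := fun l => by ring
    simp only [hd]
    rw [Finset.sum_add_distrib, ← Finset.mul_sum, Ex_one, ih]
    push_cast
    ring

lemma Ex_Y4 (n : ℕ) : ∑ l ∈ allB n, wt v l * (Yd v l n)^4
    = n * (v * (1-v)^4 + (1-v) * v^4) + 3*n*(n-1) * (v*(1-v))^2 := by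
  induction n with
  | zero => simp [allB, Yd, cw]
  | succ n ih =>
    rw [Ex_step n (fun l => (Yd v l (n+1))^4)]
    have : ∀ l ∈ allB n, wt v l * (v * (Yd v (true :: l) (n+1))^4 + (1-v) * (Yd v (false :: l) (n+1))^4)
        = wt v l * ((Yd v l n)^4 + 6 * (v*(1-v)) * (Yd v l n)^2
            + 4 * (v*(1-v)^3 - (1-v)*v^3) * (Yd v l n) + (v * (1-v)^4 + (1-v) * v^4)) := by
      intro l _
      rw [Yd_cons, Yd_cons, indR_true, indR_false]
      ring
    rw [Finset.sum_congr rfl this]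
    have hd : ∀ l : List Bool, wt v l * ((Yd v l n)^4 + 6 * (v*(1-v)) * (Yd v l n)^2
          + 4 * (v*(1-v)^3 - (1-v)*v^3) * (Yd v l n) + (v * (1-v)^4 + (1-v) * v^4))
        = wt v l * (Yd v l n)^4 + (6*(v*(1-v))) * (wt v l * (Yd v l n)^2)
          + (4 * (v*(1-v)^3 - (1-v)*v^3)) * (wt v l * Yd v l n)
          + (v * (1-v)^4 + (1-v) * v^4) * wt v l := fun l => by ring
    simp only [hd]
    rw [Finset.sum_add_distrib, Finset.sum_add_distrib, Finset.sum_add_distrib,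
      ← Finset.mul_sum, ← Finset.mul_sum, ← Finset.mul_sum, Ex_one, Ex_Y1, Ex_Y2, ih]
    push_cast
    ring


-- Paley–Zygmund style one-sided bound
section PZ
variable {v : ℝ}

lemma sigma2_pos (hv0 : 0 < v) (hv1 : v < 1) : 0 < v * (1 - v) := by nlinarith

open scoped Classical in
lemma paley_zygmund (hv0 : 0 < v) (hv1 : v < 1) (n : ℕ)
    (hn : 1 ≤ (n : ℝ) * (v * (1 - v))) (e : ℝ) (he : e = 1 ∨ e = -1) :
    (1:ℝ)/16 ≤ ∑ l ∈ allB n, wt v l * (if 0 ≤ e * Yd v l n then 1 else 0) := by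
  have hw : ∀ l : List Bool, 0 ≤ wt v l := wt_nonneg hv0.le hv1.le
  set σ2 : ℝ := v * (1 - v) with hσ2
  have hσ2pos : 0 < σ2 := sigma2_pos hv0 hv1
  set Y : List Bool → ℝ := fun l => Yd v l n with hY
  set A : ℝ := ∑ l ∈ allB n, wt v l * |Y l| with hA
  set B : ℝ := ∑ l ∈ allB n, wt v l * (Y l)^2 with hB
  set C : ℝ := ∑ l ∈ allB n, wt v l * |Y l|^3 with hC
  set D : ℝ := ∑ l ∈ allB n, wt v l * (Y l)^4 with hD
  have hBval : B = n * σ2 := Ex_Y2 n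
  have hBpos : 0 < B := by rw [hBval]; linarith
  have hApos : 0 ≤ A := Finset.sum_nonneg fun l _ => mul_nonneg (hw l) (abs_nonneg _)
  have hD4 : D ≤ 4 * B^2 := by
    have hDval : D = n * (v * (1-v)^4 + (1-v) * v^4) + 3*n*(n-1) * (v*(1-v))^2 := Ex_Y4 n
    have hmu : v * (1-v)^4 + (1-v) * v^4 ≤ σ2 := by nlinarith [sq_nonneg v, sq_nonneg (1-v)]
    have hn0 : (0:ℝ) ≤ n := Nat.cast_nonneg n
    have h1 : (n:ℝ) * σ2 ≤ ((n:ℝ)*σ2)^2 := by nlinarith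
    rw [hDval, hBval]
    have h2 : (n:ℝ) * (v * (1-v)^4 + (1-v) * v^4) ≤ (n:ℝ) * σ2 := by
      exact mul_le_mul_of_nonneg_left hmu hn0
    have h3 : 0 ≤ (n:ℝ) * σ2^2 := by positivity
    have h4 : 3*(n:ℝ)*((n:ℝ)-1) * (v*(1-v))^2 ≤ 3 * ((n:ℝ)*σ2)^2 := by
      have : 3*(n:ℝ)*((n:ℝ)-1) * σ2^2 = 3 * ((n:ℝ)*σ2)^2 - 3*((n:ℝ)*σ2^2) := by ring
      rw [hσ2] at this ⊢
      nlinarith [h3]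
    nlinarith [h1, h2, h4]
  -- Cauchy-Schwarz 1 : B^2 ≤ A * C
  have cs1 : B^2 ≤ A * C := by
    have := Finset.sum_mul_sq_le_sq_mul_sq (allB n)
      (fun l => Real.sqrt (wt v l * |Y l|)) (fun l => Real.sqrt (wt v l * |Y l|^3))
    have h1 : ∀ l ∈ allB n, Real.sqrt (wt v l * |Y l|) * Real.sqrt (wt v l * |Y l|^3)
        = wt v l * (Y l)^2 := by
      intro l _
      rw [← Real.sqrt_mul (mul_nonneg (hw l) (abs_nonneg _))]
      have habs4 : |Y l| ^ 4 = (Y l)^4 := by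
        rw [show |Y l|^4 = (|Y l|^2)^2 from by ring, sq_abs]; ring
      have heq : wt v l * |Y l| * (wt v l * |Y l|^3) = (wt v l * (Y l)^2)^2 := by
        rw [show wt v l * |Y l| * (wt v l * |Y l|^3) = wt v l^2 * |Y l|^4 from by ring, habs4]
        ring
      rw [heq, Real.sqrt_sq (mul_nonneg (hw l) (sq_nonneg _))]
    have h2 : ∀ l ∈ allB n, (Real.sqrt (wt v l * |Y l|))^2 = wt v l * |Y l| := by
      intro l _; rw [Real.sq_sqrt (mul_nonneg (hw l) (abs_nonneg _))]
    have h3 : ∀ l ∈ allB n, (Real.sqrt (wt v l * |Y l|^3))^2 = wt v l * |Y l|^3 := by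
      intro l _
      rw [Real.sq_sqrt (mul_nonneg (hw l) (pow_nonneg (abs_nonneg _) 3))]
    rw [Finset.sum_congr rfl h1, Finset.sum_congr rfl h2, Finset.sum_congr rfl h3] at this
    exact this
  -- Cauchy-Schwarz 2 : C^2 ≤ B * D
  have cs2 : C^2 ≤ B * D := by
    have := Finset.sum_mul_sq_le_sq_mul_sq (allB n)
      (fun l => Real.sqrt (wt v l * (Y l)^2)) (fun l => Real.sqrt (wt v l * (Y l)^4))
    have h1 : ∀ l ∈ allB n, Real.sqrt (wt v l * (Y l)^2) * Real.sqrt (wt v l * (Y l)^4)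
        = wt v l * |Y l|^3 := by
      intro l _
      rw [← Real.sqrt_mul (mul_nonneg (hw l) (sq_nonneg _))]
      have h6 : (|Y l|^3)^2 = ((Y l)^2)^3 := by
        rw [show (|Y l|^3)^2 = (|Y l|^2)^3 from by ring, sq_abs]
      have heq : wt v l * (Y l)^2 * (wt v l * (Y l)^4) = (wt v l * |Y l|^3)^2 := by
        rw [mul_pow, h6]; ring
      rw [heq, Real.sqrt_sq (mul_nonneg (hw l) (pow_nonneg (abs_nonneg _) 3))]
    have h2 : ∀ l ∈ allB n, (Real.sqrt (wt v l * (Y l)^2))^2 = wt v l * (Y l)^2 := by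
      intro l _; rw [Real.sq_sqrt (mul_nonneg (hw l) (sq_nonneg _))]
    have h3 : ∀ l ∈ allB n, (Real.sqrt (wt v l * (Y l)^4))^2 = wt v l * (Y l)^4 := by
      intro l _
      rw [Real.sq_sqrt (mul_nonneg (hw l) (pow_nonneg (sq_nonneg _) 2 |>.trans_eq (by ring)))]
    rw [Finset.sum_congr rfl h1, Finset.sum_congr rfl h2, Finset.sum_congr rfl h3] at this
    exact this
  have hCpos : 0 ≤ C := Finset.sum_nonneg fun l _ =>
    mul_nonneg (hw l) (pow_nonneg (abs_nonneg _) 3)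
  -- combine : A^2 ≥ B / 4
  have hA2 : B / 4 ≤ A^2 := by
    have hB3 : B^3 ≤ A^2 * D := by
      have h4 : B^4 ≤ A^2 * (B * D) := by
        calc B^4 = (B^2)^2 := by ring
        _ ≤ (A*C)^2 := pow_le_pow_left₀ (sq_nonneg B) cs1 2
        _ = A^2 * C^2 := by ring
        _ ≤ A^2 * (B * D) := by
          exact mul_le_mul_of_nonneg_left cs2 (sq_nonneg A)
      have := mul_le_mul_of_nonneg_right h4 (le_of_lt (inv_pos.mpr hBpos))
      calc B^3 = B^4 * B⁻¹ := by field_simp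
      _ ≤ A^2 * (B*D) * B⁻¹ := this
      _ = A^2 * D := by field_simp
    have hD' : A^2 * D ≤ A^2 * (4 * B^2) := mul_le_mul_of_nonneg_left hD4 (sq_nonneg A)
    have hfin : B^3 ≤ A^2 * (4*B^2) := hB3.trans hD'
    have hB2 : 0 < B^2 := by positivity
    nlinarith [hfin, hB2]
  -- positive-part expectation
  have hEY : ∑ l ∈ allB n, wt v l * Y l = 0 := Ex_Y1 n
  have habs : ∀ l : List Bool, |e * Y l| = |Y l| := by
    intro l; rcases he with rfl | rfl <;> simp [abs_mul]
  have hSpos : ∑ l ∈ allB n, wt v l * ((e * Y l) * (if 0 ≤ e * Y l then 1 else 0)) = A / 2 := by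
    have hpt : ∀ l : List Bool, wt v l * ((e * Y l) * (if 0 ≤ e * Y l then 1 else 0))
        = (wt v l * |Y l| + wt v l * (e * Y l)) / 2 := by
      intro l
      by_cases h : 0 ≤ e * Y l
      · rw [if_pos h]
        have : |Y l| = e * Y l := by rw [← habs l]; exact (abs_of_nonneg h)
        rw [this]; ring
      · rw [if_neg h]
        push_neg at h
        have : |Y l| = -(e * Y l) := by rw [← habs l]; exact (abs_of_neg h)
        rw [this]; ring
    rw [Finset.sum_congr rfl (fun l _ => hpt l)]
    have hsplit : ∑ l ∈ allB n, (wt v l * |Y l| + wt v l * (e * Y l)) / 2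
        = A / 2 + (e/2) * ∑ l ∈ allB n, wt v l * Y l := by
      have hpt2 : ∀ l : List Bool, (wt v l * |Y l| + wt v l * (e * Y l)) / 2
          = wt v l * |Y l| / 2 + (e/2) * (wt v l * Y l) := fun l => by ring
      simp only [hpt2]
      rw [Finset.sum_add_distrib, ← Finset.mul_sum, ← Finset.sum_div, ← hA]
    rw [hsplit, hEY]
    ring
  -- Cauchy-Schwarz 3
  set P : ℝ := ∑ l ∈ allB n, wt v l * (if 0 ≤ e * Y l then 1 else 0) with hP
  have cs3 : (A/2)^2 ≤ P * B := by
    have := Finset.sum_mul_sq_le_sq_mul_sq (allB n)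
      (fun l => Real.sqrt (wt v l) * (if 0 ≤ e * Y l then 1 else 0))
      (fun l => Real.sqrt (wt v l) * ((e * Y l) * (if 0 ≤ e * Y l then 1 else 0)))
    have h1 : ∀ l ∈ allB n, (Real.sqrt (wt v l) * (if 0 ≤ e * Y l then 1 else 0)) *
        (Real.sqrt (wt v l) * ((e * Y l) * (if 0 ≤ e * Y l then 1 else 0)))
        = wt v l * ((e * Y l) * (if 0 ≤ e * Y l then 1 else 0)) := by
      intro l _
      have hs : Real.sqrt (wt v l) * Real.sqrt (wt v l) = wt v l := Real.mul_self_sqrt (hw l)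
      by_cases h : 0 ≤ e * Y l
      · simp only [if_pos h, mul_one]
        rw [show Real.sqrt (wt v l) * (Real.sqrt (wt v l) * (e * Y l))
            = (Real.sqrt (wt v l) * Real.sqrt (wt v l)) * (e * Y l) from by ring, hs]
      · simp only [if_neg h, mul_zero]
    have h2 : ∀ l ∈ allB n, (Real.sqrt (wt v l) * (if 0 ≤ e * Y l then 1 else 0))^2
        = wt v l * (if 0 ≤ e * Y l then 1 else 0) := by
      intro l _
      have hs : Real.sqrt (wt v l) ^ 2 = wt v l := Real.sq_sqrt (hw l)
      by_cases h : 0 ≤ e * Y l <;> simp [h, hs]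
    have h3 : ∀ l ∈ allB n, (Real.sqrt (wt v l) * ((e * Y l) * (if 0 ≤ e * Y l then 1 else 0)))^2
        ≤ wt v l * (Y l)^2 := by
      intro l _
      have hs : Real.sqrt (wt v l) ^ 2 = wt v l := Real.sq_sqrt (hw l)
      have hY2 : (e * Y l)^2 = (Y l)^2 := by rcases he with rfl | rfl <;> ring
      by_cases h : 0 ≤ e * Y l
      · simp only [if_pos h, mul_one]
        rw [mul_pow, hs, hY2]
      · simp only [if_neg h, mul_zero]
        simpa using mul_nonneg (hw l) (sq_nonneg (Y l))
    rw [Finset.sum_congr rfl h1, Finset.sum_congr rfl h2, hSpos] at this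
    calc (A/2)^2 ≤ P * ∑ l ∈ allB n, (Real.sqrt (wt v l) * ((e * Y l) * (if 0 ≤ e * Y l then 1 else 0)))^2 := this
    _ ≤ P * B := by
      apply mul_le_mul_of_nonneg_left _ _
      · rw [hB]; exact Finset.sum_le_sum h3
      · rw [hP]
        refine Finset.sum_nonneg fun l _ => mul_nonneg (hw l) ?_
        split_ifs <;> norm_num
  -- conclude
  have h16 : B / 16 ≤ P * B := by
    calc B / 16 = (B/4) / 4 := by ring
    _ ≤ A^2 / 4 := by linarith
    _ = (A/2)^2 := by ring
    _ ≤ P * B := cs3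
  nlinarith [h16, hBpos]

end PZ


-- Kolmogorov-type maximal inequality (finite weighted sums)
section Kolmogorov
variable {v : ℝ}

open scoped Classical in
lemma kolmogorov (hv0 : 0 < v) (hv1 : v < 1) (n : ℕ) {lam : ℝ} (hlam : 0 < lam) :
    ∑ l ∈ allB n, wt v l * (if ∃ k, k ≤ n ∧ lam ≤ |Yd v l k| then 1 else 0)
      ≤ ((n : ℝ) * (v * (1 - v))) / lam ^ 2 := by
  have hw : ∀ l : List Bool, 0 ≤ wt v l := wt_nonneg hv0.le hv1.le
  set Ak : ℕ → List Bool → Prop :=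
    fun k l => lam ≤ |Yd v l k| ∧ ∀ j, j < k → |Yd v l j| < lam with hAk
  -- pointwise: indicator of bad ≤ sum of indicators of Ak
  have hpt1 : ∀ l ∈ allB n, wt v l * (if ∃ k, k ≤ n ∧ lam ≤ |Yd v l k| then 1 else 0)
      ≤ ∑ k ∈ Finset.range (n+1), wt v l * (if Ak k l then 1 else 0) := by
    intro l _
    by_cases hb : ∃ k, k ≤ n ∧ lam ≤ |Yd v l k|
    · rw [if_pos hb]
      obtain ⟨k, hkn, hk⟩ := hb
      have hex : ∃ k, lam ≤ |Yd v l k| := ⟨k, hk⟩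
      set k₀ := Nat.find hex with hk₀
      have hk₀le : k₀ ≤ n := (Nat.find_le hk).trans hkn
      have hAk₀ : Ak k₀ l := by
        refine ⟨Nat.find_spec hex, fun j hj => ?_⟩
        have := Nat.find_min hex hj
        linarith [not_le.mp this, abs_nonneg (Yd v l j)]
      calc wt v l * 1 = wt v l * (if Ak k₀ l then 1 else 0) := by rw [if_pos hAk₀]
      _ ≤ ∑ k ∈ Finset.range (n+1), wt v l * (if Ak k l then 1 else 0) := by
        refine Finset.single_le_sum (f := fun k => wt v l * (if Ak k l then 1 else (0:ℝ)))
          (fun k _ => ?_) (Finset.mem_range.mpr (Nat.lt_succ_of_le hk₀le))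
        refine mul_nonneg (hw l) ?_
        split_ifs <;> norm_num
    · rw [if_neg hb, mul_zero]
      refine Finset.sum_nonneg fun k _ => mul_nonneg (hw l) ?_
      split_ifs <;> norm_num
  -- pointwise: sum of indicators of Ak ≤ 1
  have hpt2 : ∀ l : List Bool, ∑ k ∈ Finset.range (n+1), (if Ak k l then 1 else (0:ℝ)) ≤ 1 := by
    intro l
    by_cases hb : ∃ k ∈ Finset.range (n+1), Ak k l
    · obtain ⟨k₀, _, hk₀⟩ := hb
      have huniq : ∀ k, Ak k l → k = k₀ := by
        intro k hk
        by_contra hne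
        rcases Nat.lt_or_ge k k₀ with h | h
        · exact absurd hk.1 (not_le.mpr (hk₀.2 k h))
        · have : k₀ < k := by omega
          exact absurd hk₀.1 (not_le.mpr (hk.2 k₀ this))
      calc ∑ k ∈ Finset.range (n+1), (if Ak k l then 1 else (0:ℝ))
          ≤ ∑ k ∈ Finset.range (n+1), (if k = k₀ then 1 else (0:ℝ)) := by
            refine Finset.sum_le_sum fun k _ => ?_
            split_ifs with h1 h2
            · exact le_refl _
            · exact absurd (huniq k h1) h2
            · norm_num
            · exact le_refl _
      _ ≤ 1 := by
        rw [Finset.sum_ite_eq' (Finset.range (n+1)) k₀ (fun _ => (1:ℝ))]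
        split_ifs <;> norm_num
    · push_neg at hb
      have : ∀ k ∈ Finset.range (n+1), (if Ak k l then 1 else (0:ℝ)) = 0 := by
        intro k hk; rw [if_neg (hb k hk)]
      rw [Finset.sum_congr rfl this]
      norm_num
  -- per-k bound via splitting at time k
  have hkey : ∀ k, k ≤ n →
      lam^2 * ∑ l ∈ allB n, wt v l * (if Ak k l then 1 else 0)
        ≤ ∑ l ∈ allB n, (wt v l * (if Ak k l then 1 else 0)) * (Yd v l n)^2 := by
    intro k hkn
    have hnk : n = k + (n - k) := by omega
    rw [hnk]
    rw [Finset.mul_sum,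
      sum_allB_append (fun l => lam^2 * (wt v l * (if Ak k l then 1 else 0))),
      sum_allB_append (fun l => (wt v l * (if Ak k l then 1 else 0)) * (Yd v l (k + (n-k)))^2)]
    refine Finset.sum_le_sum fun l₁ hl₁ => ?_
    have hlen : l₁.length = k := mem_allB.mp hl₁
    have hAkeq : ∀ l₂, Ak k (l₁ ++ l₂) ↔ Ak k l₁ := by
      intro l₂
      have hYeq : ∀ j, j ≤ k → Yd v (l₁ ++ l₂) j = Yd v l₁ j := by
        intro j hj
        exact Yd_append_left v l₁ l₂ (by omega)
      constructor
      · rintro ⟨h1, h2⟩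
        exact ⟨by rwa [hYeq k le_rfl] at h1, fun j hj => by
          have := h2 j hj; rwa [hYeq j (by omega)] at this⟩
      · rintro ⟨h1, h2⟩
        exact ⟨by rwa [hYeq k le_rfl], fun j hj => by
          rw [hYeq j (by omega)]; exact h2 j hj⟩
    by_cases hA : Ak k l₁
    · have hc : lam^2 ≤ (Yd v l₁ k)^2 := by
        have := hA.1
        nlinarith [abs_nonneg (Yd v l₁ k), sq_abs (Yd v l₁ k)]
      have hσ2 : (0:ℝ) ≤ ((n-k : ℕ) : ℝ) * (v * (1-v)) := by
        have := sigma2_pos hv0 hv1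
        positivity
      calc ∑ l₂ ∈ allB (n - k), lam^2 * (wt v (l₁ ++ l₂) * (if Ak k (l₁ ++ l₂) then 1 else 0))
          = ∑ l₂ ∈ allB (n - k), (lam^2 * wt v l₁) * wt v l₂ :=
            Finset.sum_congr rfl fun l₂ _ => by
              rw [if_pos ((hAkeq l₂).mpr hA), wt_append, mul_one]; ring
      _ = lam^2 * wt v l₁ := by rw [← Finset.mul_sum, Ex_one, mul_one]
      _ ≤ wt v l₁ * ((Yd v l₁ k)^2 + ((n-k : ℕ) : ℝ) * (v * (1-v))) := by
            rw [mul_comm (lam^2) (wt v l₁)]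
            refine mul_le_mul_of_nonneg_left ?_ (hw l₁)
            linarith
      _ = ∑ l₂ ∈ allB (n - k), wt v l₁ *
            ((Yd v l₁ k)^2 * wt v l₂ + (2 * Yd v l₁ k) * (wt v l₂ * Yd v l₂ (n-k))
              + wt v l₂ * (Yd v l₂ (n-k))^2) := by
            simp only [mul_add, Finset.sum_add_distrib, ← Finset.mul_sum]
            rw [Ex_one, Ex_Y1, Ex_Y2]
            ring
      _ = ∑ l₂ ∈ allB (n - k), (wt v (l₁ ++ l₂) * (if Ak k (l₁ ++ l₂) then 1 else 0)) * (Yd v (l₁ ++ l₂) (k + (n-k)))^2 :=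
            Finset.sum_congr rfl fun l₂ _ => by
              rw [if_pos ((hAkeq l₂).mpr hA), wt_append, mul_one]
              rw [show k + (n - k) = l₁.length + (n - k) from by omega]
              rw [Yd_append_right v l₁ l₂ (n - k), hlen]
              ring
    · have hz : ∀ l₂ ∈ allB (n-k), lam^2 * (wt v (l₁ ++ l₂) * (if Ak k (l₁ ++ l₂) then 1 else 0)) = 0 := by
        intro l₂ _; rw [if_neg ((hAkeq l₂).not.mpr (by simpa using hA))]; ring
      calc ∑ l₂ ∈ allB (n - k), lam^2 * (wt v (l₁ ++ l₂) * (if Ak k (l₁ ++ l₂) then 1 else 0))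
          = 0 := Finset.sum_eq_zero hz
      _ ≤ _ := Finset.sum_nonneg fun l₂ _ => mul_nonneg
            (mul_nonneg (hw _) (by split_ifs <;> norm_num)) (sq_nonneg _)
  -- assemble
  have hlam2 : (0:ℝ) < lam^2 := by positivity
  rw [le_div_iff₀ hlam2, mul_comm]
  have step1 : lam^2 * ∑ l ∈ allB n, wt v l * (if ∃ k, k ≤ n ∧ lam ≤ |Yd v l k| then 1 else 0)
      ≤ ∑ k ∈ Finset.range (n+1), lam^2 * ∑ l ∈ allB n, wt v l * (if Ak k l then 1 else 0) := by
    calc lam^2 * ∑ l ∈ allB n, wt v l * (if ∃ k, k ≤ n ∧ lam ≤ |Yd v l k| then 1 else 0)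
        ≤ lam^2 * ∑ l ∈ allB n, ∑ k ∈ Finset.range (n+1), wt v l * (if Ak k l then 1 else 0) :=
          mul_le_mul_of_nonneg_left (Finset.sum_le_sum hpt1) (le_of_lt hlam2)
    _ = ∑ k ∈ Finset.range (n+1), lam^2 * ∑ l ∈ allB n, wt v l * (if Ak k l then 1 else 0) := by
          rw [Finset.sum_comm, Finset.mul_sum]
  have step2 : ∑ k ∈ Finset.range (n+1), lam^2 * ∑ l ∈ allB n, wt v l * (if Ak k l then 1 else 0)
      ≤ ∑ k ∈ Finset.range (n+1), ∑ l ∈ allB n, (wt v l * (if Ak k l then 1 else 0)) * (Yd v l n)^2 := by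
    refine Finset.sum_le_sum fun k hk => ?_
    exact hkey k (Nat.lt_succ_iff.mp (Finset.mem_range.mp hk))
  have step3 : ∑ k ∈ Finset.range (n+1), ∑ l ∈ allB n, (wt v l * (if Ak k l then 1 else 0)) * (Yd v l n)^2
      ≤ (n : ℝ) * (v * (1 - v)) := by
    rw [Finset.sum_comm]
    calc ∑ l ∈ allB n, ∑ k ∈ Finset.range (n+1), (wt v l * (if Ak k l then 1 else 0)) * (Yd v l n)^2
        ≤ ∑ l ∈ allB n, wt v l * (Yd v l n)^2 := by
          refine Finset.sum_le_sum fun l _ => ?_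
          have : ∑ k ∈ Finset.range (n+1), (wt v l * (if Ak k l then 1 else 0)) * (Yd v l n)^2
              = (wt v l * (Yd v l n)^2) * ∑ k ∈ Finset.range (n+1), (if Ak k l then 1 else 0) := by
            rw [Finset.mul_sum]
            exact Finset.sum_congr rfl fun k _ => by ring
          rw [this]
          calc (wt v l * (Yd v l n)^2) * ∑ k ∈ Finset.range (n+1), (if Ak k l then 1 else 0)
              ≤ (wt v l * (Yd v l n)^2) * 1 :=
                mul_le_mul_of_nonneg_left (hpt2 l) (mul_nonneg (hw l) (sq_nonneg _))
          _ = wt v l * (Yd v l n)^2 := mul_one _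
    _ = (n : ℝ) * (v * (1 - v)) := Ex_Y2 n
  linarith [step1, step2, step3]

end Kolmogorov


-- block bounds and chaining
section Chain
variable {v : ℝ}

open scoped Classical

lemma block_bound (hv0 : 0 < v) (hv1 : v < 1) (n : ℕ) {lam : ℝ} (hlam : 0 < lam)
    (hn : 1 ≤ (n : ℝ) * (v * (1 - v)))
    (htail : ((n : ℝ) * (v * (1 - v))) / lam ^ 2 ≤ 1/32)
    (e : ℝ) (he : e = 1 ∨ e = -1) :
    (1:ℝ)/32 ≤ ∑ l ∈ allB n, wt v l *
      (if (∀ k, k ≤ n → |Yd v l k| ≤ lam) ∧ 0 ≤ e * Yd v l n then 1 else 0) := by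
  have hw : ∀ l : List Bool, 0 ≤ wt v l := wt_nonneg hv0.le hv1.le
  have hpz := paley_zygmund hv0 hv1 n hn e he
  have hkol := kolmogorov hv0 hv1 n hlam
  have hpt : ∀ l ∈ allB n, wt v l * (if 0 ≤ e * Yd v l n then 1 else 0)
      ≤ wt v l * (if (∀ k, k ≤ n → |Yd v l k| ≤ lam) ∧ 0 ≤ e * Yd v l n then 1 else 0)
        + wt v l * (if ∃ k, k ≤ n ∧ lam ≤ |Yd v l k| then 1 else 0) := by
    intro l _
    by_cases hpos : 0 ≤ e * Yd v l n
    · by_cases hbad : ∃ k, k ≤ n ∧ lam ≤ |Yd v l k|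
      · rw [if_pos hpos, if_pos hbad]
        have : (0:ℝ) ≤ wt v l * (if (∀ k, k ≤ n → |Yd v l k| ≤ lam) ∧ 0 ≤ e * Yd v l n then 1 else 0) := by
          refine mul_nonneg (hw l) ?_; split_ifs <;> norm_num
        linarith
      · push_neg at hbad
        have hgood : (∀ k, k ≤ n → |Yd v l k| ≤ lam) ∧ 0 ≤ e * Yd v l n :=
          ⟨fun k hk => le_of_lt (lt_of_not_ge (fun h => absurd h (not_le.mpr (hbad k hk)))), hpos⟩
        rw [if_pos hpos, if_pos hgood]
        have : (0:ℝ) ≤ wt v l * (if ∃ k, k ≤ n ∧ lam ≤ |Yd v l k| then 1 else 0) := by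
          refine mul_nonneg (hw l) ?_; split_ifs <;> norm_num
        linarith
    · rw [if_neg hpos, mul_zero]
      have h1 : (0:ℝ) ≤ wt v l * (if (∀ k, k ≤ n → |Yd v l k| ≤ lam) ∧ 0 ≤ e * Yd v l n then 1 else 0) := by
        refine mul_nonneg (hw l) ?_; split_ifs <;> norm_num
      have h2 : (0:ℝ) ≤ wt v l * (if ∃ k, k ≤ n ∧ lam ≤ |Yd v l k| then 1 else 0) := by
        refine mul_nonneg (hw l) ?_; split_ifs <;> norm_num
      linarith
  have hsum := Finset.sum_le_sum hpt
  rw [Finset.sum_add_distrib] at hsum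
  linarith

lemma tail_bound (hv0 : 0 < v) (hv1 : v < 1) (n : ℕ) {lam : ℝ} (hlam : 0 < lam)
    (htail : ((n : ℝ) * (v * (1 - v))) / lam ^ 2 ≤ 1/32) :
    (1:ℝ)/32 ≤ ∑ l ∈ allB n, wt v l *
      (if (∀ k, k ≤ n → |Yd v l k| ≤ lam) then 1 else 0) := by
  have hw : ∀ l : List Bool, 0 ≤ wt v l := wt_nonneg hv0.le hv1.le
  have hkol := kolmogorov hv0 hv1 n hlam
  have hone : ∑ l ∈ allB n, wt v l = 1 := Ex_one n
  have hpt : ∀ l ∈ allB n, wt v l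
      ≤ wt v l * (if (∀ k, k ≤ n → |Yd v l k| ≤ lam) then 1 else 0)
        + wt v l * (if ∃ k, k ≤ n ∧ lam ≤ |Yd v l k| then 1 else 0) := by
    intro l _
    by_cases hbad : ∃ k, k ≤ n ∧ lam ≤ |Yd v l k|
    · rw [if_pos hbad, mul_one]
      have : (0:ℝ) ≤ wt v l * (if (∀ k, k ≤ n → |Yd v l k| ≤ lam) then 1 else 0) := by
        refine mul_nonneg (hw l) ?_; split_ifs <;> norm_num
      linarith
    · push_neg at hbad
      have hgood : ∀ k, k ≤ n → |Yd v l k| ≤ lam :=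
        fun k hk => le_of_lt (hbad k hk)
      rw [if_pos hgood, mul_one]
      have : (0:ℝ) ≤ wt v l * (if ∃ k, k ≤ n ∧ lam ≤ |Yd v l k| then 1 else 0) := by
        refine mul_nonneg (hw l) ?_; split_ifs <;> norm_num
      linarith
  have hsum := Finset.sum_le_sum hpt
  rw [Finset.sum_add_distrib, hone] at hsum
  linarith

/-- invariant : forced ones up to `s`, then compensated walk in `[v, a]` -/
def Inv (v : ℝ) (a s t : ℕ) (l : List Bool) : Prop :=
  (∀ k, k ≤ s → cw l k = (k:ℝ)) ∧ ∀ k, s < k → k ≤ t → v ≤ Yd v l k ∧ Yd v l k ≤ (a:ℝ)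

/-- middle-third condition at time `t` -/
def Mid (v : ℝ) (a t : ℕ) (l : List Bool) : Prop :=
  (a:ℝ)/3 ≤ Yd v l t ∧ Yd v l t ≤ 2*(a:ℝ)/3

lemma chain_base (hv0 : 0 < v) (hv1 : v < 1) (a s : ℕ)
    (hb1 : (a:ℝ)/3 ≤ (1-v)*(s:ℝ)) (hb2 : (1-v)*(s:ℝ) ≤ (a:ℝ)/2) :
    v^s ≤ ∑ l ∈ allB s, wt v l * (if Inv v a s s l ∧ Mid v a s l then 1 else 0) := by
  have hw : ∀ l : List Bool, 0 ≤ wt v l := wt_nonneg hv0.le hv1.le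
  set l₀ : List Bool := List.replicate s true with hl₀
  have hmem : l₀ ∈ allB s := mem_allB.mpr (by simp [hl₀])
  have hcw : ∀ k, k ≤ s → cw l₀ k = (k:ℝ) := by
    intro k hk
    rw [cw]
    have : ∀ j ∈ Finset.range k, indR (l₀.getD j false) = 1 := by
      intro j hj
      rw [Finset.mem_range] at hj
      have : l₀.getD j false = true := by
        rw [hl₀]
        rw [List.getD_eq_getElem?_getD]
        rw [List.getElem?_replicate]
        simp only [if_pos (by omega : j < s)]
        rfl
      rw [this, indR_true]
    rw [Finset.sum_congr rfl this, Finset.sum_const, Finset.card_range]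
    simp
  have hInv : Inv v a s s l₀ ∧ Mid v a s l₀ := by
    constructor
    · exact ⟨hcw, fun k h1 h2 => absurd (lt_of_lt_of_le h1 h2) (lt_irrefl _)⟩
    · constructor
      · rw [Yd, hcw s le_rfl]; linarith [hb1]
      · rw [Yd, hcw s le_rfl]; linarith [hb2]
  have hwt : wt v l₀ = v^s := by
    rw [wt, hl₀, List.map_replicate, List.prod_replicate, thw_true]
  calc v^s = wt v l₀ * (if Inv v a s s l₀ ∧ Mid v a s l₀ then 1 else 0) := by
        rw [if_pos hInv, hwt, mul_one]
  _ ≤ ∑ l ∈ allB s, wt v l * (if Inv v a s s l ∧ Mid v a s l then 1 else 0) := by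
        refine Finset.single_le_sum (f := fun l => wt v l * (if Inv v a s s l ∧ Mid v a s l then 1 else 0))
          (fun l _ => mul_nonneg (hw l) (by split_ifs <;> norm_num)) hmem

lemma chain_step (hv0 : 0 < v) (hv1 : v < 1) (a s N t : ℕ) (ha : 5 ≤ a) (hst : s ≤ t)
    (hblock : ∀ e : ℝ, e = 1 ∨ e = -1 → (1:ℝ)/32 ≤ ∑ l ∈ allB N, wt v l *
      (if (∀ k, k ≤ N → |Yd v l k| ≤ (a:ℝ)/8) ∧ 0 ≤ e * Yd v l N then 1 else 0)) :
    (1/32) * ∑ l ∈ allB t, wt v l * (if Inv v a s t l ∧ Mid v a t l then 1 else 0)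
      ≤ ∑ l ∈ allB (t+N), wt v l * (if Inv v a s (t+N) l ∧ Mid v a (t+N) l then 1 else 0) := by
  have hw : ∀ l : List Bool, 0 ≤ wt v l := wt_nonneg hv0.le hv1.le
  have ha' : (5:ℝ) ≤ (a:ℝ) := by exact_mod_cast ha
  rw [sum_allB_append (fun l => wt v l * (if Inv v a s (t+N) l ∧ Mid v a (t+N) l then 1 else 0)),
    Finset.mul_sum]
  refine Finset.sum_le_sum fun l₁ hl₁ => ?_
  have hlen : l₁.length = t := mem_allB.mp hl₁
  by_cases h1 : Inv v a s t l₁ ∧ Mid v a t l₁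
  · set x : ℝ := Yd v l₁ t with hx
    set e : ℝ := if x ≤ (a:ℝ)/2 then 1 else -1 with he'
    have he : e = 1 ∨ e = -1 := by
      rw [he']; split_ifs <;> simp
    have himp : ∀ l₂, l₂ ∈ allB N →
        ((∀ k, k ≤ N → |Yd v l₂ k| ≤ (a:ℝ)/8) ∧ 0 ≤ e * Yd v l₂ N) →
        Inv v a s (t+N) (l₁ ++ l₂) ∧ Mid v a (t+N) (l₁ ++ l₂) := by
      intro l₂ hl₂ ⟨hg1, hg2⟩
      obtain ⟨⟨hInv1, hInv2⟩, hMid1, hMid2⟩ := h1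
      have hYleft : ∀ j, j ≤ t → Yd v (l₁ ++ l₂) j = Yd v l₁ j := by
        intro j hj; exact Yd_append_left v l₁ l₂ (by omega)
      have hYright : ∀ j, Yd v (l₁ ++ l₂) (t + j) = x + Yd v l₂ j := by
        intro j
        rw [show t + j = l₁.length + j from by omega, Yd_append_right, hlen, hx]
      constructor
      · constructor
        · intro k hk
          rw [cw_append_left l₁ l₂ (by omega)]
          exact hInv1 k hk
        · intro k hks hkt
          by_cases hkt' : k ≤ t
          · rw [hYleft k hkt']
            exact hInv2 k hks hkt'
          · push_neg at hkt'
            obtain ⟨j, rfl⟩ : ∃ j, k = t + j := ⟨k - t, by omega⟩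
            have hjN : j ≤ N := by omega
            rw [hYright j]
            have hb := hg1 j hjN
            have hb1 := abs_le.mp hb
            constructor
            · nlinarith [hb1.1, hMid1, hv1, ha']
            · nlinarith [hb1.2, hMid2]
      · have hbN := abs_le.mp (hg1 N le_rfl)
        rw [show t + N = t + N from rfl]
        constructor
        · rw [hYright N]
          rcases he with he1 | he1
          · have : 0 ≤ Yd v l₂ N := by
              have := hg2; rw [he1] at this; linarith
            linarith [hMid1]
          · have hxgt : ¬ (x ≤ (a:ℝ)/2) := by
              by_contra hcon
              rw [he'] at he1; rw [if_pos hcon] at he1; norm_num at he1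
            push_neg at hxgt
            have : Yd v l₂ N ≥ -((a:ℝ)/8) := hbN.1
            nlinarith [hxgt]
        · rw [hYright N]
          rcases he with he1 | he1
          · have hxle : x ≤ (a:ℝ)/2 := by
              by_contra hcon
              rw [he'] at he1; rw [if_neg hcon] at he1; norm_num at he1
            have : Yd v l₂ N ≤ (a:ℝ)/8 := hbN.2
            nlinarith [hxle]
          · have : e * Yd v l₂ N ≥ 0 := hg2
            rw [he1] at this
            have : Yd v l₂ N ≤ 0 := by linarith
            linarith [hMid2]
    have hblk := hblock e he
    rw [if_pos h1, mul_one]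
    calc 1/32 * wt v l₁
        ≤ (∑ l₂ ∈ allB N, wt v l₂ *
            (if (∀ k, k ≤ N → |Yd v l₂ k| ≤ (a:ℝ)/8) ∧ 0 ≤ e * Yd v l₂ N then 1 else 0)) * wt v l₁ := by
          exact mul_le_mul_of_nonneg_right hblk (hw l₁)
    _ = ∑ l₂ ∈ allB N, wt v (l₁ ++ l₂) *
            (if (∀ k, k ≤ N → |Yd v l₂ k| ≤ (a:ℝ)/8) ∧ 0 ≤ e * Yd v l₂ N then 1 else 0) := by
          rw [Finset.sum_mul]
          exact Finset.sum_congr rfl fun l₂ _ => by rw [wt_append]; ring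
    _ ≤ ∑ l₂ ∈ allB N, wt v (l₁ ++ l₂) *
            (if Inv v a s (t+N) (l₁ ++ l₂) ∧ Mid v a (t+N) (l₁ ++ l₂) then 1 else 0) := by
          refine Finset.sum_le_sum fun l₂ hl₂ => ?_
          refine mul_le_mul_of_nonneg_left ?_ (hw _)
          by_cases hg : (∀ k, k ≤ N → |Yd v l₂ k| ≤ (a:ℝ)/8) ∧ 0 ≤ e * Yd v l₂ N
          · rw [if_pos hg, if_pos (himp l₂ hl₂ hg)]
          · rw [if_neg hg]; split_ifs <;> norm_num
  · rw [if_neg h1, mul_zero, mul_zero]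
    refine Finset.sum_nonneg fun l₂ _ => mul_nonneg (hw _) ?_
    split_ifs <;> norm_num

lemma chain_tail (hv0 : 0 < v) (hv1 : v < 1) (a s r t : ℕ) (ha : 5 ≤ a) (hst : s ≤ t)
    (htail : (1:ℝ)/32 ≤ ∑ l ∈ allB r, wt v l *
      (if (∀ k, k ≤ r → |Yd v l k| ≤ (a:ℝ)/8) then 1 else 0)) :
    (1/32) * ∑ l ∈ allB t, wt v l * (if Inv v a s t l ∧ Mid v a t l then 1 else 0)
      ≤ ∑ l ∈ allB (t+r), wt v l * (if Inv v a s (t+r) l then 1 else 0) := by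
  have hw : ∀ l : List Bool, 0 ≤ wt v l := wt_nonneg hv0.le hv1.le
  have ha' : (5:ℝ) ≤ (a:ℝ) := by exact_mod_cast ha
  rw [sum_allB_append (fun l => wt v l * (if Inv v a s (t+r) l then 1 else 0)),
    Finset.mul_sum]
  refine Finset.sum_le_sum fun l₁ hl₁ => ?_
  have hlen : l₁.length = t := mem_allB.mp hl₁
  by_cases h1 : Inv v a s t l₁ ∧ Mid v a t l₁
  · have himp : ∀ l₂, l₂ ∈ allB r →
        (∀ k, k ≤ r → |Yd v l₂ k| ≤ (a:ℝ)/8) →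
        Inv v a s (t+r) (l₁ ++ l₂) := by
      intro l₂ hl₂ hg1
      obtain ⟨⟨hInv1, hInv2⟩, hMid1, hMid2⟩ := h1
      have hYright : ∀ j, Yd v (l₁ ++ l₂) (t + j) = Yd v l₁ t + Yd v l₂ j := by
        intro j
        rw [show t + j = l₁.length + j from by omega, Yd_append_right, hlen]
      constructor
      · intro k hk
        rw [cw_append_left l₁ l₂ (by omega)]
        exact hInv1 k hk
      · intro k hks hkt
        by_cases hkt' : k ≤ t
        · rw [Yd_append_left v l₁ l₂ (by omega)]
          exact hInv2 k hks hkt'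
        · push_neg at hkt'
          obtain ⟨j, rfl⟩ : ∃ j, k = t + j := ⟨k - t, by omega⟩
          have hjN : j ≤ r := by omega
          rw [hYright j]
          have hb1 := abs_le.mp (hg1 j hjN)
          constructor
          · nlinarith [hb1.1, hMid1, hv1, ha']
          · nlinarith [hb1.2, hMid2]
    rw [if_pos h1, mul_one]
    calc 1/32 * wt v l₁
        ≤ (∑ l₂ ∈ allB r, wt v l₂ *
            (if (∀ k, k ≤ r → |Yd v l₂ k| ≤ (a:ℝ)/8) then 1 else 0)) * wt v l₁ := by
          exact mul_le_mul_of_nonneg_right htail (hw l₁)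
    _ = ∑ l₂ ∈ allB r, wt v (l₁ ++ l₂) *
            (if (∀ k, k ≤ r → |Yd v l₂ k| ≤ (a:ℝ)/8) then 1 else 0) := by
          rw [Finset.sum_mul]
          exact Finset.sum_congr rfl fun l₂ _ => by rw [wt_append]; ring
    _ ≤ ∑ l₂ ∈ allB r, wt v (l₁ ++ l₂) *
            (if Inv v a s (t+r) (l₁ ++ l₂) then 1 else 0) := by
          refine Finset.sum_le_sum fun l₂ hl₂ => ?_
          refine mul_le_mul_of_nonneg_left ?_ (hw _)
          by_cases hg : (∀ k, k ≤ r → |Yd v l₂ k| ≤ (a:ℝ)/8)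
          · rw [if_pos hg, if_pos (himp l₂ hl₂ hg)]
          · rw [if_neg hg]; split_ifs <;> norm_num
  · rw [if_neg h1, mul_zero, mul_zero]
    refine Finset.sum_nonneg fun l₂ _ => mul_nonneg (hw _) ?_
    split_ifs <;> norm_num

lemma chain_main (hv0 : 0 < v) (hv1 : v < 1) (a s N B : ℕ) (ha : 5 ≤ a)
    (hb1 : (a:ℝ)/3 ≤ (1-v)*(s:ℝ)) (hb2 : (1-v)*(s:ℝ) ≤ (a:ℝ)/2)
    (hblock : ∀ e : ℝ, e = 1 ∨ e = -1 → (1:ℝ)/32 ≤ ∑ l ∈ allB N, wt v l *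
      (if (∀ k, k ≤ N → |Yd v l k| ≤ (a:ℝ)/8) ∧ 0 ≤ e * Yd v l N then 1 else 0)) :
    v^s * (1/32)^B ≤ ∑ l ∈ allB (s + B*N), wt v l *
      (if Inv v a s (s + B*N) l ∧ Mid v a (s + B*N) l then 1 else 0) := by
  induction B with
  | zero =>
    simpa using chain_base hv0 hv1 a s hb1 hb2
  | succ B ih =>
    have hstep := chain_step hv0 hv1 a s N (s + B*N) ha (Nat.le_add_right _ _) hblock
    have h32 : (0:ℝ) < 1/32 := by norm_num
    calc v^s * (1/32)^(B+1) = (1/32) * (v^s * (1/32)^B) := by ring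
    _ ≤ (1/32) * ∑ l ∈ allB (s + B*N), wt v l *
          (if Inv v a s (s + B*N) l ∧ Mid v a (s + B*N) l then 1 else 0) :=
        mul_le_mul_of_nonneg_left ih h32.le
    _ ≤ ∑ l ∈ allB ((s + B*N) + N), wt v l *
          (if Inv v a s ((s + B*N) + N) l ∧ Mid v a ((s + B*N) + N) l then 1 else 0) := hstep
    _ = ∑ l ∈ allB (s + (B+1)*N), wt v l *
          (if Inv v a s (s + (B+1)*N) l ∧ Mid v a (s + (B+1)*N) l then 1 else 0) := by
        rw [show (s + B*N) + N = s + (B+1)*N from by ring]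

lemma chain_full (hv0 : 0 < v) (hv1 : v < 1) (a s N B r : ℕ) (ha : 5 ≤ a)
    (hb1 : (a:ℝ)/3 ≤ (1-v)*(s:ℝ)) (hb2 : (1-v)*(s:ℝ) ≤ (a:ℝ)/2)
    (hblock : ∀ e : ℝ, e = 1 ∨ e = -1 → (1:ℝ)/32 ≤ ∑ l ∈ allB N, wt v l *
      (if (∀ k, k ≤ N → |Yd v l k| ≤ (a:ℝ)/8) ∧ 0 ≤ e * Yd v l N then 1 else 0))
    (htail : (1:ℝ)/32 ≤ ∑ l ∈ allB r, wt v l *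
      (if (∀ k, k ≤ r → |Yd v l k| ≤ (a:ℝ)/8) then 1 else 0)) :
    v^s * (1/32)^(B+1) ≤ ∑ l ∈ allB (s + B*N + r), wt v l *
      (if Inv v a s (s + B*N + r) l then 1 else 0) := by
  have hmain := chain_main hv0 hv1 a s N B ha hb1 hb2 hblock
  have htl := chain_tail hv0 hv1 a s r (s + B*N) ha (Nat.le_add_right _ _) htail
  have h32 : (0:ℝ) < 1/32 := by norm_num
  calc v^s * (1/32)^(B+1) = (1/32) * (v^s * (1/32)^B) := by ring
  _ ≤ (1/32) * ∑ l ∈ allB (s + B*N), wt v l *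
        (if Inv v a s (s + B*N) l ∧ Mid v a (s + B*N) l then 1 else 0) :=
      mul_le_mul_of_nonneg_left hmain h32.le
  _ ≤ ∑ l ∈ allB ((s + B*N) + r), wt v l *
        (if Inv v a s ((s + B*N) + r) l then 1 else 0) := htl

lemma inv_implies_event (hv0 : 0 < v) (hv1 : v < 1) (A m : ℕ) (l : List Bool)
    (h : Inv v (am m) (sm v m) m l) :
    ∀ k, k ≤ m → gBar v A m k ≤ cw l k ∧ cw l k ≤ dBar v m k := by
  intro k hk
  obtain ⟨h1, h2⟩ := h
  by_cases hks : k ≤ sm v m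
  · rw [gBar, dBar, if_pos hks, if_pos hks, h1 k hks]
    exact ⟨le_rfl, le_rfl⟩
  · have hy := h2 k (by omega) hk
    rw [Yd] at hy
    have hcw1 : v * k + v ≤ cw l k := by linarith [hy.1]
    have hcw2 : cw l k ≤ v * k + (am m : ℝ) := by linarith [hy.2]
    rw [gBar, dBar, if_neg hks, if_neg hks]
    refine ⟨?_, by linarith⟩
    by_cases hkc : k ≤ m - cm m
    · rw [if_pos hkc]; linarith
    · rw [if_neg hkc]
      have hAa : (0:ℝ) ≤ (A:ℝ) * (am m : ℝ) := by positivity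
      linarith

/-- main combinatorial bound, for a single (good) `m` -/
lemma comb_final (hv0 : 0 < v) (hv1 : v < 1) (A m : ℕ)
    (h6 : 6 ≤ am m)
    (hsm : sm v m ≤ m)
    (hN1 : 1 ≤ (am m * am m) / 512)
    (hNs2 : (1:ℝ) ≤ (((am m * am m) / 512 : ℕ) : ℝ) * (v * (1 - v))) :
    v ^ (sm v m) * (1/32) ^ ((m - sm v m) / ((am m * am m) / 512) + 1)
      ≤ ∑ l ∈ allB m, wt v l *
        (if (∀ k, k ≤ m → gBar v A m k ≤ cw l k ∧ cw l k ≤ dBar v m k) then 1 else 0) := by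
  classical
  have hw : ∀ l : List Bool, 0 ≤ wt v l := wt_nonneg hv0.le hv1.le
  set a := am m with hadef
  set s := sm v m with hsdef
  set N := (a * a) / 512 with hNdef
  set B := (m - s) / N with hBdef
  set r := (m - s) % N with hrdef
  have hm : m = s + B * N + r := by
    have h2 : B * N + r = m - s := by
      rw [hBdef, hrdef, mul_comm]
      exact Nat.div_add_mod (m-s) N
    have h3 : s + (B * N + r) = m := by
      rw [h2, Nat.add_sub_cancel' hsm]
    rw [← h3, Nat.add_assoc]
  have ha5 : 5 ≤ a := by omega
  have ha' : (6:ℝ) ≤ (a:ℝ) := by exact_mod_cast h6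
  have hapos : (0:ℝ) < (a:ℝ) := by linarith
  have hlam : (0:ℝ) < (a:ℝ)/8 := by linarith
  have hσ : 0 < v * (1-v) := sigma2_pos hv0 hv1
  have hσ4 : v * (1-v) ≤ 1/4 := by nlinarith [sq_nonneg (1 - 2*v)]
  -- floor bounds for s
  have hsub : (0:ℝ) < 1 - v := by linarith
  have hsb2 : (s:ℝ) ≤ (a:ℝ) / (2 * (1 - v)) := by
    rw [hsdef, sm, ← hadef]
    exact Nat.floor_le (by positivity)
  have hsb1 : (a:ℝ) / (2 * (1 - v)) - 1 < (s:ℝ) := by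
    rw [hsdef, sm, ← hadef]
    exact Nat.sub_one_lt_floor _
  have hb2 : (1-v)*(s:ℝ) ≤ (a:ℝ)/2 := by
    have := mul_le_mul_of_nonneg_left hsb2 hsub.le
    calc (1-v)*(s:ℝ) ≤ (1-v) * ((a:ℝ) / (2*(1-v))) := this
    _ = (a:ℝ)/2 := by field_simp
  have hb1 : (a:ℝ)/3 ≤ (1-v)*(s:ℝ) := by
    have := mul_le_mul_of_nonneg_left hsb1.le hsub.le
    have h1 : (1-v) * ((a:ℝ)/(2*(1-v)) - 1) ≤ (1-v)*(s:ℝ) := by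
      exact mul_le_mul_of_nonneg_left hsb1.le hsub.le
    have h2 : (1-v) * ((a:ℝ)/(2*(1-v)) - 1) = (a:ℝ)/2 - (1-v) := by
      field_simp
    have h3 : (a:ℝ)/3 ≤ (a:ℝ)/2 - (1-v) := by
      have : (1-v) ≤ 1 := by linarith
      linarith
    linarith [h1, h2.symm.trans_le h1]
  -- N bounds
  have hNle : (N:ℝ) ≤ (a:ℝ)*(a:ℝ)/512 := by
    rw [hNdef]
    calc (((a*a)/512 : ℕ) : ℝ) ≤ ((a*a : ℕ) : ℝ)/((512:ℕ):ℝ) := Nat.cast_div_le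
    _ = (a:ℝ)*(a:ℝ)/512 := by push_cast; ring
  have hblockcond : ∀ n : ℕ, (n:ℝ) ≤ (N:ℝ) → ((n:ℝ) * (v * (1-v))) / ((a:ℝ)/8)^2 ≤ 1/32 := by
    intro n hn
    have h1 : (n:ℝ) * (v*(1-v)) ≤ ((a:ℝ)*(a:ℝ)/512) * (1/4) := by
      have hn0 : (0:ℝ) ≤ (n:ℝ) := Nat.cast_nonneg n
      calc (n:ℝ) * (v*(1-v)) ≤ (n:ℝ) * (1/4) := by nlinarith
      _ ≤ ((a:ℝ)*(a:ℝ)/512) * (1/4) := by nlinarith [hNle]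
    rw [div_le_iff₀ (by positivity)]
    nlinarith [h1]
  have hblock : ∀ e : ℝ, e = 1 ∨ e = -1 → (1:ℝ)/32 ≤ ∑ l ∈ allB N, wt v l *
      (if (∀ k, k ≤ N → |Yd v l k| ≤ (a:ℝ)/8) ∧ 0 ≤ e * Yd v l N then 1 else 0) := by
    intro e he
    exact block_bound hv0 hv1 N hlam hNs2 (hblockcond N le_rfl) e he
  have htail : (1:ℝ)/32 ≤ ∑ l ∈ allB r, wt v l *
      (if (∀ k, k ≤ r → |Yd v l k| ≤ (a:ℝ)/8) then 1 else 0) := by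
    refine tail_bound hv0 hv1 r hlam ?_
    refine hblockcond r ?_
    have : r < N := Nat.mod_lt _ (by omega)
    exact_mod_cast this.le
  have hchain := chain_full hv0 hv1 a s N B r ha5 hb1 hb2 hblock htail
  rw [← hm] at hchain
  refine hchain.trans (Finset.sum_le_sum fun l hl => ?_)
  refine mul_le_mul_of_nonneg_left ?_ (hw l)
  by_cases hI : Inv v a s m l
  · rw [if_pos hI, if_pos (inv_implies_event hv0 hv1 A m l hI)]
  · rw [if_neg hI]; split_ifs <;> norm_num

open Filter in
/-- eventual combinatorial lower bound -/
lemma comb_main (hv0 : 0 < v) (hv1 : v < 1) (A : ℕ) :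
    ∃ ζ : ℝ, 0 < ζ ∧ ∀ᶠ m : ℕ in atTop,
      Real.exp (-ζ * (m:ℝ)^((1:ℝ)/3)) ≤ ∑ l ∈ allB m, wt v l *
        (if (∀ k, k ≤ m → gBar v A m k ≤ cw l k ∧ cw l k ≤ dBar v m k) then 1 else 0) := by
  classical
  have hσ : 0 < v * (1-v) := sigma2_pos hv0 hv1
  have hσ4 : v * (1-v) ≤ 1/4 := by nlinarith [sq_nonneg (1 - 2*v)]
  have hsub : (0:ℝ) < 1 - v := by linarith
  have hlogv : 0 < Real.log (1/v) := Real.log_pos (by rw [lt_div_iff₀ hv0]; linarith)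
  have hlog32 : 0 < Real.log 32 := Real.log_pos (by norm_num)
  set ζ : ℝ := Real.log (1/v) / (2*(1-v)) + 4097 * Real.log 32 + 1 with hζ
  have hζpos : 0 < ζ := by
    have : 0 < Real.log (1/v) / (2*(1-v)) := by positivity
    positivity
  refine ⟨ζ, hζpos, ?_⟩
  -- thresholds
  obtain ⟨K, hK⟩ := exists_nat_gt (2048 / (v * (1-v)))
  obtain ⟨K2, hK2⟩ := exists_nat_gt (1 / (2*(1-v)))
  have hx3 : Tendsto (fun m : ℕ => ((m:ℝ))^((1:ℝ)/3)) atTop atTop :=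
    (tendsto_rpow_atTop (by norm_num)).comp tendsto_natCast_atTop_atTop
  have hAt : Tendsto (fun m : ℕ => am m) atTop atTop :=
    tendsto_nat_floor_atTop.comp hx3
  have ev1 : ∀ᶠ m : ℕ in atTop, K + 32 ≤ am m := hAt.eventually (eventually_ge_atTop _)
  have ev2 : ∀ᶠ m : ℕ in atTop, (64:ℝ) ≤ ((m:ℝ))^((1:ℝ)/3) := hx3.eventually (eventually_ge_atTop _)
  have ev3 : ∀ᶠ m : ℕ in atTop, ((K2 + 1 : ℕ):ℝ) ≤ ((m:ℝ))^((2:ℝ)/3) :=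
    ((tendsto_rpow_atTop (by norm_num : (0:ℝ) < 2/3)).comp
      tendsto_natCast_atTop_atTop).eventually (eventually_ge_atTop _)
  have ev4 : ∀ᶠ m : ℕ in atTop, 1 ≤ m := eventually_ge_atTop 1
  filter_upwards [ev1, ev2, ev3, ev4] with m hm1 hm2 hm3 hm4
  -- notation
  set a := am m with hadef
  set x : ℝ := ((m:ℝ))^((1:ℝ)/3) with hxdef
  have hmR : (1:ℝ) ≤ (m:ℝ) := by exact_mod_cast hm4
  have hx0 : (0:ℝ) < x := by linarith
  have hx1 : (1:ℝ) ≤ x := by linarith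
  have hax : (a:ℝ) ≤ x := by
    rw [hadef, am, hxdef]
    exact Nat.floor_le (by positivity)
  have hax1 : x - 1 < (a:ℝ) := by
    rw [hadef, am, hxdef]
    exact Nat.sub_one_lt_floor _
  have hx2 : x^2 = ((m:ℝ))^((2:ℝ)/3) := by
    rw [hxdef, ← Real.rpow_natCast (((m:ℝ))^((1:ℝ)/3)) 2, ← Real.rpow_mul (by positivity)]
    norm_num
  have hx3' : x^3 = (m:ℝ) := by
    rw [hxdef, ← Real.rpow_natCast (((m:ℝ))^((1:ℝ)/3)) 3, ← Real.rpow_mul (by positivity)]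
    norm_num
  have haK : (K:ℝ) ≤ (a:ℝ) := by
    have : (K:ℕ) ≤ a := by omega
    exact_mod_cast this
  have ha32 : (32:ℝ) ≤ (a:ℝ) := by
    have : (32:ℕ) ≤ a := by omega
    exact_mod_cast this
  have haKs : 2048 ≤ (a:ℝ) * (v*(1-v)) := by
    have h1 : 2048 / (v*(1-v)) ≤ (a:ℝ) := le_trans hK.le haK
    rw [div_le_iff₀ hσ] at h1
    linarith
  -- conditions of comb_final
  have h6 : 6 ≤ a := by omega
  have hN1 : 1 ≤ (a * a) / 512 := by
    have : 512 ≤ a * a := by nlinarith [show 32 ≤ a from by omega]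
    omega
  set N := (a*a)/512 with hNdef
  have hNcast : (a:ℝ)*(a:ℝ) - 511 ≤ 512 * (N:ℝ) := by
    have h1 : a * a ≤ 512 * N + 511 := by
      have := Nat.div_add_mod (a*a) 512
      have h2 : (a*a) % 512 < 512 := Nat.mod_lt _ (by norm_num)
      omega
    have : ((a*a : ℕ):ℝ) ≤ ((512*N + 511 : ℕ):ℝ) := by exact_mod_cast h1
    push_cast at this
    linarith
  have hNs2 : (1:ℝ) ≤ (N:ℝ) * (v * (1-v)) := by
    have h1 : (a:ℝ)*((a:ℝ)*(v*(1-v))) ≥ 1 * 2048 :=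
      mul_le_mul (by linarith) (by linarith [haKs]) (by norm_num) (by linarith) |>.ge
    have h2 : ((a:ℝ)*(a:ℝ) - 511) * (v*(1-v)) ≤ 512 * ((N:ℝ) * (v*(1-v))) := by
      have := mul_le_mul_of_nonneg_right hNcast hσ.le
      linarith [this]
    nlinarith [hσ, hσ4]
  -- bound s
  set s : ℕ := sm v m with hsdef
  have hsx : (s:ℝ) ≤ x / (2*(1-v)) := by
    have h1 : (s:ℝ) ≤ (a:ℝ) / (2*(1-v)) := by
      rw [hsdef, sm, ← hadef]
      exact Nat.floor_le (by positivity)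
    have h2 : (a:ℝ) / (2*(1-v)) ≤ x / (2*(1-v)) :=
      div_le_div_of_nonneg_right hax (by linarith)
    linarith
  have hK2x : (1:ℝ)/(2*(1-v)) ≤ x^2 := by
    rw [hx2]
    calc (1:ℝ)/(2*(1-v)) ≤ (K2:ℝ) := hK2.le
    _ ≤ ((K2+1 : ℕ):ℝ) := by push_cast; linarith
    _ ≤ ((m:ℝ))^((2:ℝ)/3) := hm3
  have hsm : s ≤ m := by
    have h1 : (s:ℝ) ≤ x * (1/(2*(1-v))) := by
      rw [mul_one_div]
      exact hsx
    have h2 : x * (1/(2*(1-v))) ≤ x * x^2 := by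
      refine mul_le_mul_of_nonneg_left hK2x hx0.le
    have h3 : (s:ℝ) ≤ (m:ℝ) := by
      calc (s:ℝ) ≤ x * x^2 := h1.trans h2
      _ = x^3 := by ring
      _ = (m:ℝ) := hx3'
    exact_mod_cast h3
  -- bound B
  set B : ℕ := (m - s) / N with hBdef
  have hxa2 : x/2 ≤ (a:ℝ) := by linarith [hax1, hx1, hm2]
  have hx64 : (64:ℝ) ≤ x := hm2
  have h4088 : (4088:ℝ) ≤ x^2 := by nlinarith
  have hNge : x^2/4096 ≤ (N:ℝ) := by
    have h1 : x^2/4 ≤ (a:ℝ)*(a:ℝ) := by nlinarith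
    linarith [hNcast]
  have hNpos : (0:ℝ) < (N:ℝ) := by
    have : (1:ℕ) ≤ N := hN1
    have : (1:ℝ) ≤ (N:ℝ) := by exact_mod_cast this
    linarith
  have hBle : (B:ℝ) ≤ 4096 * x := by
    have h1 : (B:ℝ) ≤ ((m - s : ℕ):ℝ)/(N:ℝ) := by
      rw [hBdef]
      exact Nat.cast_div_le
    have h2 : ((m - s : ℕ):ℝ) ≤ (m:ℝ) := by
      have : m - s ≤ m := Nat.sub_le _ _
      exact_mod_cast this
    have h3 : (B:ℝ) ≤ (m:ℝ)/(N:ℝ) :=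
      h1.trans (div_le_div_of_nonneg_right h2 hNpos.le)
    have h4 : (m:ℝ)/(N:ℝ) ≤ (m:ℝ)/(x^2/4096) := by
      refine div_le_div_of_nonneg_left (by linarith) (by nlinarith [hx0]) hNge
    have h5 : (m:ℝ)/(x^2/4096) = 4096 * x := by
      rw [← hx3']
      field_simp
    linarith
  -- main exponential estimate
  have hmain : Real.exp (-ζ * x) ≤ v ^ s * (1/32) ^ (B + 1) := by
    have hv : v ^ s = Real.exp ((s:ℝ) * Real.log v) := by
      rw [Real.exp_nat_mul, Real.exp_log hv0]
    have h32 : (1/32 : ℝ) ^ (B+1) = Real.exp (((B+1 : ℕ):ℝ) * Real.log (1/32)) := by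
      rw [Real.exp_nat_mul, Real.exp_log (by norm_num)]
    rw [hv, h32, ← Real.exp_add]
    refine Real.exp_le_exp.mpr ?_
    have hlv : Real.log v = - Real.log (1/v) := by
      rw [one_div, Real.log_inv]
      ring
    have hl32 : Real.log (1/32 : ℝ) = - Real.log 32 := by
      rw [one_div, Real.log_inv]
    rw [hlv, hl32]
    have hterm1 : (s:ℝ) * Real.log (1/v) ≤ x * (Real.log (1/v) / (2*(1-v))) := by
      calc (s:ℝ) * Real.log (1/v) ≤ (x / (2*(1-v))) * Real.log (1/v) :=
            mul_le_mul_of_nonneg_right hsx hlogv.le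
      _ = x * (Real.log (1/v) / (2*(1-v))) := by ring
    have hterm2 : ((B+1 : ℕ):ℝ) * Real.log 32 ≤ x * (4097 * Real.log 32) := by
      have hB1 : ((B+1 : ℕ):ℝ) ≤ 4097 * x := by
        push_cast
        linarith [hBle, hx1]
      calc ((B+1 : ℕ):ℝ) * Real.log 32 ≤ (4097 * x) * Real.log 32 :=
            mul_le_mul_of_nonneg_right hB1 hlog32.le
      _ = x * (4097 * Real.log 32) := by ring
    have : (s:ℝ) * Real.log (1/v) + ((B+1 : ℕ):ℝ) * Real.log 32 ≤ x * (ζ - 1) := by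
      rw [hζ]
      have : x * (Real.log (1/v) / (2*(1-v)) + 4097 * Real.log 32 + 1 - 1)
          = x * (Real.log (1/v) / (2*(1-v))) + x * (4097 * Real.log 32) := by ring
      linarith [hterm1, hterm2]
    have hxz : x * (ζ - 1) ≤ ζ * x := by nlinarith [hx0]
    push_cast at this ⊢
    linarith
  -- combine with comb_final
  have hfinal := comb_final hv0 hv1 A m h6 hsm hN1 hNs2
  rw [← hadef, ← hNdef, ← hsdef, ← hBdef] at hfinal
  exact le_trans hmain hfinal

end Chain

-- ===== measure-theoretic part =====
section Measure
open MeasureTheory ProbabilityTheory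

lemma bernoulliStep_singleton_one {p : ℝ} (hp : 0 ≤ p) :
    bernoulliStep p {(1:ℤ)} = ENNReal.ofReal p := by
  rw [bernoulliStep, Measure.add_apply, Measure.smul_apply, Measure.smul_apply,
    Measure.dirac_apply' _ (measurableSet_singleton _),
    Measure.dirac_apply' _ (measurableSet_singleton _)]
  simp

lemma bernoulliStep_singleton_zero {p : ℝ} (hp : p ≤ 1) :
    bernoulliStep p {(0:ℤ)} = ENNReal.ofReal (1 - p) := by
  rw [bernoulliStep, Measure.add_apply, Measure.smul_apply, Measure.smul_apply,
    Measure.dirac_apply' _ (measurableSet_singleton _),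
    Measure.dirac_apply' _ (measurableSet_singleton _)]
  simp

lemma wt_eq_prod_range (v : ℝ) (l : List Bool) :
    ∏ j ∈ Finset.range l.length, thw v (l.getD j false) = wt v l := by
  induction l with
  | nil => simp [wt]
  | cons b t ih =>
    rw [List.length_cons, Finset.prod_range_succ', wt_cons]
    have h0 : (b :: t).getD 0 false = b := rfl
    have hsucc : ∀ j, (b :: t).getD (j+1) false = t.getD j false := fun j => rfl
    simp only [h0, hsucc]
    rw [ih, mul_comm]

/-- value of a bit as an integer -/
def zOf (b : Bool) : ℤ := if b then 1 else 0

lemma zOf_inj : Function.Injective zOf := by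
  intro a b h
  cases a <;> cases b <;> simp [zOf] at h ⊢

lemma prob_ge (vp : ℝ) (hv0 : 0 < vp) (hv1 : vp < 1)
    (Ω : Type*) [MeasureSpace Ω] [IsProbabilityMeasure (ℙ : Measure Ω)]
    (ξ : ℕ → Ω → ℤ)
    (hiid : iIndepFun ξ ℙ)
    (hlaw : ∀ n : ℕ, Measure.map (ξ n) ℙ = bernoulliStep vp) (m : ℕ)
    (E : Set Ω) (G : Finset (List Bool)) (hG : G ⊆ allB m)
    (hsub : ∀ l ∈ G, ∀ ω : Ω, (∀ j, j < m → ξ j ω = zOf (l.getD j false)) → ω ∈ E) :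
    ENNReal.ofReal (∑ l ∈ G, wt vp l) ≤ ℙ E := by
  classical
  -- a.e.-measurability of the steps
  have hae : ∀ n, AEMeasurable (ξ n) ℙ := by
    intro n
    by_contra hno
    have h0 : Measure.map (ξ n) ℙ = 0 := Measure.map_of_not_aemeasurable hno
    rw [hlaw n] at h0
    have h1 : bernoulliStep vp {(1:ℤ)} = 0 := by rw [h0]; rfl
    rw [bernoulliStep_singleton_one hv0.le] at h1
    exact absurd h1 (ne_of_gt (ENNReal.ofReal_pos.mpr hv0))
  set ξ' : ℕ → Ω → ℤ := fun n => (hae n).mk (ξ n) with hξ'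
  have hmeas : ∀ n, Measurable (ξ' n) := fun n => (hae n).measurable_mk
  have haeq : ∀ n, ξ n =ᵐ[ℙ] ξ' n := fun n => (hae n).ae_eq_mk
  have hmap' : ∀ n, Measure.map (ξ' n) ℙ = bernoulliStep vp := by
    intro n
    rw [← Measure.map_congr (haeq n)]
    exact hlaw n
  -- cylinders
  set C : List Bool → Set Ω := fun l => ⋂ j ∈ Finset.range m, (ξ' j) ⁻¹' {zOf (l.getD j false)}
    with hC
  set Cx : List Bool → Set Ω := fun l => ⋂ j ∈ Finset.range m, (ξ j) ⁻¹' {zOf (l.getD j false)}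
    with hCx
  have hCmeas : ∀ l, MeasurableSet (C l) := by
    intro l
    exact MeasurableSet.biInter (Finset.range m).countable_toSet
      (fun j _ => (hmeas j) (measurableSet_singleton _))
  -- agreement set
  have hagree : ∀ᵐ ω ∂(ℙ : Measure Ω), ∀ j ∈ Finset.range m, ξ j ω = ξ' j ω := by
    rw [Filter.eventually_all_finset]
    intro j _
    exact haeq j
  have hCae : ∀ l, C l =ᵐ[ℙ] Cx l := by
    intro l
    rw [Filter.eventuallyEq_set]
    filter_upwards [hagree] with ω hω
    simp only [hC, hCx, Set.mem_iInter, Set.mem_preimage, Set.mem_singleton_iff]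
    constructor
    · intro h j hj; rw [hω j hj]; exact h j hj
    · intro h j hj; rw [← hω j hj]; exact h j hj
  -- probability of a cylinder
  have hsingle : ∀ n (z : ℤ), ℙ ((ξ n) ⁻¹' {z}) = bernoulliStep vp {z} := by
    intro n z
    rw [← hlaw n, Measure.map_apply_of_aemeasurable (hae n) (measurableSet_singleton z)]
  have hCprob : ∀ l ∈ G, ℙ (C l) = ENNReal.ofReal (wt vp l) := by
    intro l hl
    have hlen : l.length = m := mem_allB.mp (hG hl)
    have h1 : ℙ (C l) = ℙ (Cx l) := measure_congr (hCae l)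
    have h2 : ℙ (Cx l) = ∏ j ∈ Finset.range m, ℙ ((ξ j) ⁻¹' {zOf (l.getD j false)}) := by
      refine hiid.meas_biInter ?_
      intro j _
      exact ⟨{zOf (l.getD j false)}, measurableSet_singleton _, rfl⟩
    have h3 : ∀ j ∈ Finset.range m, ℙ ((ξ j) ⁻¹' {zOf (l.getD j false)})
        = ENNReal.ofReal (thw vp (l.getD j false)) := by
      intro j _
      rw [hsingle j]
      cases hb : l.getD j false
      · rw [zOf, if_neg (by simp), bernoulliStep_singleton_zero hv1.le, thw_false]
      · rw [zOf, if_pos rfl, bernoulliStep_singleton_one hv0.le, thw_true]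
    rw [h1, h2, Finset.prod_congr rfl h3, ← ENNReal.ofReal_prod_of_nonneg]
    · rw [← hlen, wt_eq_prod_range]
    · intro j _
      cases l.getD j false <;> simp [thw] <;> linarith
  -- disjointness
  have hdisj : (G : Set (List Bool)).PairwiseDisjoint C := by
    intro l hl l' hl' hne
    have hlen : l.length = m := mem_allB.mp (hG hl)
    have hlen' : l'.length = m := mem_allB.mp (hG hl')
    have hdiff : ∃ j, j < m ∧ l.getD j false ≠ l'.getD j false := by
      by_contra hcon
      push_neg at hcon
      apply hne
      apply List.ext_getElem (by omega)
      intro i h1 h2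
      have := hcon i (by omega)
      rwa [List.getD_eq_getElem l false (by omega), List.getD_eq_getElem l' false (by omega)] at this
    obtain ⟨j, hjm, hj⟩ := hdiff
    refine Set.disjoint_left.mpr ?_
    intro ω hω hω'
    simp only [hC, Set.mem_iInter, Set.mem_preimage, Set.mem_singleton_iff] at hω hω'
    have e1 := hω j (Finset.mem_range.mpr hjm)
    have e2 := hω' j (Finset.mem_range.mpr hjm)
    exact hj (zOf_inj (e1.symm.trans e2))
  -- union bound from below
  have hunion : ℙ (⋃ l ∈ G, C l) = ∑ l ∈ G, ℙ (C l) :=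
    measure_biUnion_finset hdisj (fun l _ => hCmeas l)
  -- the union (up to the null set) is contained in E
  have hbadnull : ℙ {ω | ¬ ∀ j ∈ Finset.range m, ξ j ω = ξ' j ω} = 0 := by
    exact hagree
  have hsubset : (⋃ l ∈ G, C l) ∩ {ω | ∀ j ∈ Finset.range m, ξ j ω = ξ' j ω} ⊆ E := by
    rintro ω ⟨hω1, hω2⟩
    simp only [Set.mem_iUnion] at hω1
    obtain ⟨l, hl, hωC⟩ := hω1
    refine hsub l hl ω ?_
    intro j hj
    simp only [hC, Set.mem_iInter, Set.mem_preimage, Set.mem_singleton_iff] at hωC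
    rw [hω2 j (Finset.mem_range.mpr hj)]
    exact hωC j (Finset.mem_range.mpr hj)
  have hmono : ℙ (⋃ l ∈ G, C l) ≤ ℙ E := by
    calc ℙ (⋃ l ∈ G, C l)
        ≤ ℙ (((⋃ l ∈ G, C l) ∩ {ω | ∀ j ∈ Finset.range m, ξ j ω = ξ' j ω})
            ∪ {ω | ¬ ∀ j ∈ Finset.range m, ξ j ω = ξ' j ω}) := by
          refine measure_mono ?_
          intro ω hω
          by_cases h : ∀ j ∈ Finset.range m, ξ j ω = ξ' j ω
          · exact Or.inl ⟨hω, h⟩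
          · exact Or.inr h
    _ ≤ ℙ ((⋃ l ∈ G, C l) ∩ {ω | ∀ j ∈ Finset.range m, ξ j ω = ξ' j ω})
          + ℙ {ω | ¬ ∀ j ∈ Finset.range m, ξ j ω = ξ' j ω} := measure_union_le _ _
    _ = ℙ ((⋃ l ∈ G, C l) ∩ {ω | ∀ j ∈ Finset.range m, ξ j ω = ξ' j ω}) := by
          rw [hbadnull, add_zero]
    _ ≤ ℙ E := measure_mono hsubset
  calc ENNReal.ofReal (∑ l ∈ G, wt vp l)
      = ∑ l ∈ G, ENNReal.ofReal (wt vp l) :=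
        ENNReal.ofReal_sum_of_nonneg (fun l _ => wt_nonneg hv0.le hv1.le l)
  _ = ∑ l ∈ G, ℙ (C l) := Finset.sum_congr rfl (fun l hl => (hCprob l hl).symm)
  _ = ℙ (⋃ l ∈ G, C l) := hunion.symm
  _ ≤ ℙ E := hmono

end Measure

-- ===== rate function bounds =====
lemma vp_bounds {p vp : ℝ} (hp0 : 0 < p) (hp1 : p < 1/2)
    (h0 : 0 ≤ vp) (h1 : vp ≤ 1) (hroot : rateFn p vp = Real.log 2) :
    0 < vp ∧ vp < 1 := by
  have hp1' : p < 1 := by linarith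
  constructor
  · rcases eq_or_lt_of_le h0 with h | h
    · exfalso
      rw [← h] at hroot
      have : rateFn p 0 = Real.log (1 / (1 - p)) := by
        rw [rateFn]
        norm_num
      rw [this] at hroot
      have hlt : Real.log (1 / (1-p)) < Real.log 2 := by
        have hp2 : (0:ℝ) < 1 - p := by linarith
        apply Real.log_lt_log (by positivity)
        rw [div_lt_iff₀ hp2]
        linarith
      linarith [hroot, hlt]
    · exact h
  · rcases eq_or_lt_of_le h1 with h | h
    · exfalso
      rw [h] at hroot
      have : rateFn p 1 = Real.log (1 / p) := by
        rw [rateFn]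
        norm_num
      rw [this] at hroot
      have hgt : Real.log 2 < Real.log (1 / p) := by
        apply Real.log_lt_log (by norm_num)
        rw [lt_div_iff₀ hp0]
        linarith
      linarith [hroot, hgt]
    · exact h


end TubeAux
open TubeAux
end TubeAuxSection
open TubeAux

/-- **Lemma (tube probability lower bound):** under the tilted measure `P̂` (i.e. for the
random walk with Bernoulli(`v(p)`) steps), there is `ζ₁ > 0` such that for all large
`m`, the probability that the compensated walk `Ŝ_k = S_k − v(p)·k` stays between the
compensated barriers `ĝ_m` and `d̂_m` up to time `m` is at least `exp(−ζ₁·m^{1/3})`. -/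
theorem tube_probability_lower_bound
    (p : ℝ) (hp0 : 0 < p) (hp1 : p < 1 / 2)
    (vp : ℝ) (hvp0 : 0 ≤ vp) (hvp1 : vp ≤ 1) (hvproot : rateFn p vp = Real.log 2)
    (A : ℕ) (hA : 4 ≤ A)
    (Ω : Type*) [MeasureSpace Ω] [IsProbabilityMeasure (ℙ : Measure Ω)]
    (ξ : ℕ → Ω → ℤ)
    (hiid : iIndepFun ξ ℙ)
    (hlaw : ∀ n : ℕ, Measure.map (ξ n) ℙ = bernoulliStep vp) :
    ∃ ζ₁ : ℝ, 0 < ζ₁ ∧ ∀ᶠ m : ℕ in atTop,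
      ENNReal.ofReal (Real.exp (-ζ₁ * (m : ℝ) ^ ((1 : ℝ) / 3))) ≤
        ℙ {ω | ∀ k ≤ m,
          gBar vp A m k - vp * k ≤ (walk ξ k ω : ℝ) - vp * k ∧
          (walk ξ k ω : ℝ) - vp * k ≤ dBar vp m k - vp * k} := by
  classical
  obtain ⟨hv0, hv1⟩ := vp_bounds hp0 hp1 hvp0 hvp1 hvproot
  obtain ⟨ζ, hζ, hev⟩ := comb_main (v := vp) hv0 hv1 A
  refine ⟨ζ, hζ, ?_⟩
  filter_upwards [hev] with m hm
  set G : Finset (List Bool) := (allB m).filter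
    (fun l => ∀ k, k ≤ m → gBar vp A m k ≤ cw l k ∧ cw l k ≤ dBar vp m k) with hGdef
  have hGsum : ∑ l ∈ allB m, wt vp l *
      (if (∀ k, k ≤ m → gBar vp A m k ≤ cw l k ∧ cw l k ≤ dBar vp m k) then 1 else 0)
      = ∑ l ∈ G, wt vp l := by
    rw [hGdef, Finset.sum_filter]
    refine Finset.sum_congr rfl fun l _ => ?_
    split_ifs <;> ring
  rw [hGsum] at hm
  refine le_trans (ENNReal.ofReal_le_ofReal hm) ?_
  refine prob_ge vp hv0 hv1 Ω ξ hiid hlaw m _ G (Finset.filter_subset _ _) ?_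
  intro l hl ω hω
  rw [hGdef, Finset.mem_filter] at hl
  obtain ⟨hmem, hpred⟩ := hl
  simp only [Set.mem_setOf_eq]
  intro k hk
  have hwalk : ((walk ξ k ω : ℤ) : ℝ) = cw l k := by
    rw [walk, cw]
    push_cast
    refine Finset.sum_congr rfl fun j hj => ?_
    rw [Finset.mem_range] at hj
    rw [hω j (by omega)]
    cases l.getD j false <;> simp [zOf, indR]
  obtain ⟨hg, hd⟩ := hpred k hk
  rw [hwalk]
  constructor <;> linarith


end
end

section
/- Let ρ, σ ∈ ℝ with ρ + 1 < σ, let v ∈ (0,1), and let ℓ be a positive integer such that σ + ℓ·v < ρ + ℓ and ρ + v·ℓ > σ. Then for every x ∈ ℤ ∩ [ρ, σ] and every y ∈ ℤ ∩ [ρ + v·ℓ, σ + v·ℓ], there exists a sequence x = x₀, x₁, …, x_ℓ = y of integers such that x_{i+1} − x_i ∈ {0,1} for all i ∈ {0,…,ℓ−1} and ρ + v·i ≤ x_i ≤ σ + v·i for all i ∈ {0,…,ℓ}. -/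
/-- **Lemma (path connection in a diagonal strip):** let `ρ + 1 < σ`, `v ∈ (0,1)` and let
`ℓ ≥ 1` satisfy `σ + ℓv < ρ + ℓ` and `ρ + vℓ > σ`.  Then any integer `x ∈ [ρ, σ]` can be
joined to any integer `y ∈ [ρ + vℓ, σ + vℓ]` by a path of `ℓ` steps in `{0,1}` staying in
the strip `[ρ + vi, σ + vi]`. -/
theorem strip_path_connection
    (ρ σ : ℝ) (hρσ : ρ + 1 < σ) (v : ℝ) (hv0 : 0 < v) (hv1 : v < 1)
    (ℓ : ℕ) (hℓ : 1 ≤ ℓ) (h1 : σ + ℓ * v < ρ + ℓ) (h2 : σ < ρ + v * ℓ)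
    (x y : ℤ) (hx0 : ρ ≤ (x : ℝ)) (hx1 : (x : ℝ) ≤ σ)
    (hy0 : ρ + v * ℓ ≤ (y : ℝ)) (hy1 : (y : ℝ) ≤ σ + v * ℓ) :
    ∃ c : ℕ → ℤ, c 0 = x ∧ c ℓ = y ∧
      (∀ i < ℓ, c (i + 1) - c i = 0 ∨ c (i + 1) - c i = 1) ∧
      (∀ i ≤ ℓ, ρ + v * i ≤ (c i : ℝ) ∧ (c i : ℝ) ≤ σ + v * i) := by
  refine ⟨fun i => max (max x (y - ℓ + i)) ⌈ρ + v * i⌉, ?_, ?_, ?_, ?_⟩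
  · -- c 0 = x
    have hyx : y - (ℓ : ℤ) ≤ x := by
      have h : ((y - (ℓ : ℤ) : ℤ) : ℝ) ≤ (x : ℝ) := by push_cast; nlinarith
      exact_mod_cast h
    have hceil : ⌈ρ + v * ((0 : ℕ) : ℝ)⌉ ≤ x := by
      rw [Int.ceil_le]
      push_cast
      linarith
    simp only [Nat.cast_zero] at hceil ⊢
    omega
  · -- c ℓ = y
    have hxy : x ≤ y := by
      have : (x : ℝ) ≤ (y : ℝ) := by linarith
      exact_mod_cast this
    have hceil : ⌈ρ + v * ((ℓ : ℕ) : ℝ)⌉ ≤ y := by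
      rw [Int.ceil_le]
      push_cast
      linarith
    beta_reduce
    omega
  · -- steps
    intro i hi
    have hA : ⌈ρ + v * (i : ℝ)⌉ ≤ ⌈ρ + v * ((i : ℕ) + 1 : ℕ)⌉ := by
      apply Int.ceil_le_ceil
      push_cast
      nlinarith
    have hB : ⌈ρ + v * ((i : ℕ) + 1 : ℕ)⌉ ≤ ⌈ρ + v * (i : ℝ)⌉ + 1 := by
      rw [Int.ceil_le]
      push_cast
      have := Int.le_ceil (ρ + v * (i : ℝ))
      linarith
    push_cast at hA hB ⊢
    omega
  · -- strip bounds
    intro i hi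
    constructor
    · have h := Int.le_ceil (ρ + v * (i : ℝ))
      have : (⌈ρ + v * (i : ℝ)⌉ : ℝ) ≤
          ((max (max x (y - ℓ + i)) ⌈ρ + v * (i : ℝ)⌉ : ℤ) : ℝ) := by
        exact_mod_cast Int.cast_le.mpr (le_max_right _ _)
      linarith
    · have hx' : (x : ℝ) ≤ σ + v * i := by
        have : 0 ≤ v * i := by positivity
        linarith
      have hy' : ((y - ℓ + i : ℤ) : ℝ) ≤ σ + v * i := by
        push_cast
        have hiℓ : (i : ℝ) ≤ (ℓ : ℝ) := by exact_mod_cast hi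
        nlinarith [mul_nonneg (le_of_lt (by linarith : (0:ℝ) < 1 - v)) (by linarith : (0:ℝ) ≤ (ℓ:ℝ) - i)]
      have hc' : ((⌈ρ + v * (i : ℝ)⌉ : ℤ) : ℝ) ≤ σ + v * i := by
        have := Int.ceil_lt_add_one (ρ + v * (i : ℝ))
        linarith
      have : ((max (max x (y - ℓ + i)) ⌈ρ + v * (i : ℝ)⌉ : ℤ) : ℝ) ≤ σ + v * i := by
        push_cast
        push_cast at hy'
        exact max_le (max_le hx' hy') hc'
      exact this
end
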